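/- Let E be a real normed vector space, λ : E → (E →L[ℝ] ℝ) a differentiable 1-form, Z : E → E a differentiable vector field with ι_Z dλ = λ, f : E → ℝ a differentiable function, and h : E × ℝ → ℝ a differentiable function such that D_p h(p,θ)(Z p) = h(p,θ) for all (p,θ). Fix t ∈ ℝ and define the 1-form Λ_t on Ē := E × ℝ × ℝ by Λ_t(p,s,θ)(v,c,d) := λ_p(v) + (2s + t·h(p,θ))·d, with exterior derivative dΛ_t, and define f^𝒟 : Ē → ℝ by f^𝒟(p,s,θ) := s² + f(p). Fix a point (p,s,θ) with D := 2s² + Df(p)(Z p) > 0 and set Y := (h(p,θ)/(2D)) · (2s·Z p, −Df(p)(Z p), 0) ∈ E × ℝ × ℝ. Then: (i) Df^𝒟(p,s,θ)(Y) = 0; (ii) Λ_t(p,s,θ)(Y) = 0; (iii) for every (v,c,d) ∈ E × ℝ × ℝ, dΛ_t at (p,s,θ) evaluated on (Y, (v,c,d)) equals (2s·h(p,θ)/(2D))·Λ_t(p,s,θ)(v,c,d) − h(p,θ)·d. (That is, the vector field Y = (h_θ/(2 df^𝒟(Z^𝒟)))·(2s Z − df(Z)∂_s) is tangent to the level sets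 of f^𝒟, lies in ker Λ_t, and satisfies ι_Y dΛ_t = (2s h_θ/(2 df^𝒟(Z^𝒟)))·Λ_t − (d/dt)Λ_t.) -/

import Mathlib

set_option maxHeartbeats 1000000 in
/-- At a point `(p,s,θ)` with `D = 2s² + Df(p)(Z p) > 0`, the vector
`Y = (h(p,θ)/(2D))·(2s·Z p, −Df(p)(Z p), 0)` is tangent to the level sets of
`f^𝒟(p,s,θ) = s² + f(p)`, lies in `ker Λ_t`, and satisfies
`ι_Y dΛ_t = (2s·h(p,θ)/(2D))·Λ_t − (d/dt)Λ_t`, where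
`Λ_t(p,s,θ)(v,c,d) = λ_p(v) + (2s + t·h(p,θ))·d` and `ι_Z dλ = λ`. -/
theorem stmt_11 {E : Type*} [NormedAddCommGroup E] [NormedSpace ℝ E]
    (lam : E → (E →L[ℝ] ℝ)) (Z : E → E)
    (hlam : Differentiable ℝ lam) (hZ : Differentiable ℝ Z)
    (hLiouville : ∀ p v : E,
      (fderiv ℝ lam p (Z p)) v - (fderiv ℝ lam p v) (Z p) = lam p v)
    (f : E → ℝ) (hf : Differentiable ℝ f)
    (h : E × ℝ → ℝ) (hh : Differentiable ℝ h)
    (hhZ : ∀ (q : E) (θ : ℝ), fderiv ℝ (fun x : E => h (x, θ)) q (Z q) = h (q, θ))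
    (t : ℝ)
    (Lam : E × ℝ × ℝ → ((E × ℝ × ℝ) →L[ℝ] ℝ))
    (hLam : ∀ (q : E) (s θ : ℝ) (v : E) (c d : ℝ),
      Lam (q, s, θ) (v, c, d) = lam q v + (2 * s + t * h (q, θ)) * d)
    (p : E) (s θ : ℝ) (D : ℝ)
    (hD : D = 2 * s ^ 2 + fderiv ℝ f p (Z p)) (hDpos : 0 < D)
    (Y : E × ℝ × ℝ)
    (hY : Y = (h (p, θ) / (2 * D)) • (((2 * s) • Z p, -fderiv ℝ f p (Z p), 0) : E × ℝ × ℝ)) :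
    fderiv ℝ (fun x : E × ℝ × ℝ => x.2.1 ^ 2 + f x.1) (p, s, θ) Y = 0 ∧
    Lam (p, s, θ) Y = 0 ∧
    (∀ (v : E) (c d : ℝ),
      (fderiv ℝ Lam (p, s, θ) Y) (v, c, d) - (fderiv ℝ Lam (p, s, θ) (v, c, d)) Y
        = (2 * s * h (p, θ) / (2 * D)) * Lam (p, s, θ) (v, c, d) - h (p, θ) * d) := by
  have hDne : (2 * D) ≠ 0 := by positivity
  set a : ℝ := h (p, θ) / (2 * D) with ha
  set dfZ : ℝ := fderiv ℝ f p (Z p) with hdfZ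
  have hY1 : Y.1 = (a * (2 * s)) • Z p := by rw [hY]; simp [smul_smul]
  have hY21 : Y.2.1 = a * (-dfZ) := by rw [hY]; simp [smul_eq_mul]
  have hY22 : Y.2.2 = 0 := by rw [hY]; simp
  have lamZ : lam p (Z p) = 0 := by
    have := hLiouville p (Z p); simpa using this.symm
  -- projections
  set fst3 : (E × ℝ × ℝ) →L[ℝ] E := ContinuousLinearMap.fst ℝ E (ℝ × ℝ) with hfst3
  set sndfst : (E × ℝ × ℝ) →L[ℝ] ℝ :=
    (ContinuousLinearMap.fst ℝ ℝ ℝ).comp (ContinuousLinearMap.snd ℝ E (ℝ × ℝ)) with hsndfst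
  set prd : (E × ℝ × ℝ) →L[ℝ] ℝ :=
    (ContinuousLinearMap.snd ℝ ℝ ℝ).comp (ContinuousLinearMap.snd ℝ E (ℝ × ℝ)) with hprd
  -- derivative of h in E direction
  have hcomp : HasFDerivAt (fun x : E => h (x, θ))
      ((fderiv ℝ h (p, θ)).comp ((ContinuousLinearMap.id ℝ E).prod 0)) p :=
    (hh (p, θ)).hasFDerivAt.comp p (HasFDerivAt.prodMk (hasFDerivAt_id p) (hasFDerivAt_const θ p))
  have hZ0 : fderiv ℝ h (p, θ) (Z p, 0) = h (p, θ) := by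
    have := hhZ p θ
    rw [hcomp.fderiv] at this
    simpa using this
  -- part (i)
  have hder1 : HasFDerivAt (fun x : E × ℝ × ℝ => x.2.1 ^ 2 + f x.1)
      (((2 * s) • sndfst) + (fderiv ℝ f p).comp fst3) (p, s, θ) := by
    have h1 : HasFDerivAt (fun x : E × ℝ × ℝ => x.2.1) sndfst (p, s, θ) := by
      exact sndfst.hasFDerivAt
    have h1sq : HasFDerivAt (fun x : E × ℝ × ℝ => x.2.1 ^ 2) ((2 * s) • sndfst) (p, s, θ) := by
      have hm := h1.mul h1
      have hfn : (fun x : E × ℝ × ℝ => x.2.1 ^ 2) = fun x => x.2.1 * x.2.1 := by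
        funext x; ring
      rw [hfn]
      have he : (p, s, θ).2.1 • sndfst + (p, s, θ).2.1 • sndfst = (2 * s) • sndfst := by
        rw [← add_smul]; congr 1; ring
      rw [he] at hm
      exact hm
    have h2 : HasFDerivAt (fun x : E × ℝ × ℝ => f x.1) ((fderiv ℝ f p).comp fst3) (p, s, θ) :=
      (hf p).hasFDerivAt.comp (p, s, θ) fst3.hasFDerivAt
    exact h1sq.add h2
  have part1 : fderiv ℝ (fun x : E × ℝ × ℝ => x.2.1 ^ 2 + f x.1) (p, s, θ) Y = 0 := by
    rw [hder1.fderiv]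
    simp only [ContinuousLinearMap.add_apply, ContinuousLinearMap.smul_apply,
      ContinuousLinearMap.comp_apply, hsndfst, hfst3, hprd]
    simp only [ContinuousLinearMap.coe_fst', ContinuousLinearMap.coe_snd',
      ContinuousLinearMap.coe_comp', Function.comp_apply]
    rw [hY1, hY21, map_smul]
    simp only [smul_eq_mul, ← hdfZ]
    ring
  -- explicit formula for Lam
  have hLamEq : Lam = fun x : E × ℝ × ℝ =>
      ((lam x.1).comp fst3) + ((2 * x.2.1 + t * h (x.1, x.2.2)) • prd) := by
    funext x
    obtain ⟨q, s', θ'⟩ := x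
    apply ContinuousLinearMap.ext
    rintro ⟨v, c, d⟩
    simp [hLam, hfst3, hprd]
  -- part (ii)
  have part2 : Lam (p, s, θ) Y = 0 := by
    rw [hLam p s θ Y.1 Y.2.1 Y.2.2, hY1, hY22, map_smul, lamZ]
    simp
  -- derivative of Lam
  set precompL : (E →L[ℝ] ℝ) →L[ℝ] ((E × ℝ × ℝ) →L[ℝ] ℝ) :=
    (ContinuousLinearMap.compL ℝ (E × ℝ × ℝ) E ℝ).flip fst3 with hprecompL
  set φ' : (E × ℝ × ℝ) →L[ℝ] ℝ :=
    (2 : ℝ) • sndfst + t • ((fderiv ℝ h (p, θ)).comp (fst3.prod prd)) with hφ'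
  have hφ : HasFDerivAt (fun x : E × ℝ × ℝ => 2 * x.2.1 + t * h (x.1, x.2.2)) φ' (p, s, θ) := by
    have h1 : HasFDerivAt (fun x : E × ℝ × ℝ => x.2.1) sndfst (p, s, θ) := sndfst.hasFDerivAt
    have h2 : HasFDerivAt (fun x : E × ℝ × ℝ => h (x.1, x.2.2))
        ((fderiv ℝ h (p, θ)).comp (fst3.prod prd)) (p, s, θ) :=
      (hh (p, θ)).hasFDerivAt.comp (p, s, θ) (fst3.prod prd).hasFDerivAt
    exact (h1.const_mul 2).add (h2.const_mul t)
  have hG1p : HasFDerivAt (fun x : E × ℝ × ℝ => precompL (lam x.1))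
      (precompL.comp ((fderiv ℝ lam p).comp fst3)) (p, s, θ) :=
    precompL.hasFDerivAt.comp (p, s, θ)
      ((hlam p).hasFDerivAt.comp (p, s, θ) fst3.hasFDerivAt)
  have hG1 : HasFDerivAt (fun x : E × ℝ × ℝ => (lam x.1).comp fst3)
      (precompL.comp ((fderiv ℝ lam p).comp fst3)) (p, s, θ) := by
    have hfun : (fun x : E × ℝ × ℝ => (lam x.1).comp fst3)
        = (fun x : E × ℝ × ℝ => precompL (lam x.1)) := by
      funext x
      refine ContinuousLinearMap.ext fun w => ?_
      simp [hprecompL]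
    rw [hfun]; exact hG1p
  have hG : HasFDerivAt (fun x : E × ℝ × ℝ =>
      ((lam x.1).comp fst3) + ((2 * x.2.1 + t * h (x.1, x.2.2)) • prd))
      (precompL.comp ((fderiv ℝ lam p).comp fst3) + φ'.smulRight prd) (p, s, θ) :=
    hG1.add (hφ.smul_const prd)
  have hfd : fderiv ℝ Lam (p, s, θ)
      = precompL.comp ((fderiv ℝ lam p).comp fst3) + φ'.smulRight prd := by
    rw [hLamEq]; exact hG.fderiv
  refine ⟨part1, part2, ?_⟩
  intro v c d
  rw [hfd]
  simp only [hprecompL, hφ', hfst3, hsndfst, hprd, ContinuousLinearMap.add_apply,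
    ContinuousLinearMap.comp_apply, ContinuousLinearMap.smulRight_apply,
    ContinuousLinearMap.smul_apply, ContinuousLinearMap.flip_apply,
    ContinuousLinearMap.compL_apply, ContinuousLinearMap.prod_apply,
    ContinuousLinearMap.coe_fst', ContinuousLinearMap.coe_snd',
    ContinuousLinearMap.coe_comp', Function.comp_apply, smul_eq_mul]
  rw [hY1, hY21, hY22, hLam p s θ v c d]
  have key1 : fderiv ℝ h (p, θ) (((a * (2 * s)) • Z p : E), (0 : ℝ))
      = (a * (2 * s)) * h (p, θ) := by
    have he : (((a * (2 * s)) • Z p : E), (0 : ℝ)) = (a * (2 * s)) • ((Z p, 0) : E × ℝ) := by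
      simp
    rw [he, map_smul, hZ0, smul_eq_mul]
  rw [key1]
  have e1 : fderiv ℝ lam p ((a * (2 * s)) • Z p) v
      = (a * (2 * s)) * (fderiv ℝ lam p (Z p)) v := by
    rw [map_smul]; simp
  have e2 : (fderiv ℝ lam p v) ((a * (2 * s)) • Z p)
      = (a * (2 * s)) * (fderiv ℝ lam p v) (Z p) := by
    rw [map_smul]; simp
  rw [e1, e2]
  have hX : (fderiv ℝ lam p (Z p)) v = (fderiv ℝ lam p v) (Z p) + lam p v := by
    linarith [hLiouville p v]
  have hne2 : 2 * s ^ 2 + dfZ ≠ 0 := by rw [← hD]; exact ne_of_gt hDpos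
  rw [hX, ha, hD]
  field_simp
  ring
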